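/- Let Φ = {φ_1, ..., φ_N} be a unit-norm tight frame for 𝔽^M (𝔽 = ℝ or ℂ) that is biangular, i.e., the angle set A_Φ = { |⟨φ_j, φ_l⟩| : j ≠ l } has exactly two elements c_1 ≠ c_2. Then Φ is equidistributed: there exist positive integers m_1, m_2 with m_1 + m_2 = N − 1 such that for every j ∈ {1, ..., N} and each k ∈ {1, 2}, the number of indices l ≠ j with |⟨φ_j, φ_l⟩| = c_k equals m_k. -/

import Mathlib

/-- Every biangular unit-norm tight frame is equidistributed: if
`Φ = {φ_1, ..., φ_N}` is a unit-norm tight frame for `𝔽^M` whose angle set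
`{ |⟨φ_j, φ_l⟩| : j ≠ l }` is `{c₁, c₂}` with `c₁ ≠ c₂`, then there are positive
integers `m₁, m₂` with `m₁ + m₂ = N - 1` such that every `φ_j` makes angle `c_k` with
exactly `m_k` of the other vectors. -/
theorem biangular_tight_frame_equidistributed {𝕜 : Type*} [RCLike 𝕜] {M N : ℕ}
    (φ : Fin N → EuclideanSpace 𝕜 (Fin M))
    (hunit : ∀ j, ‖φ j‖ = 1)
    (htight : ∀ x : EuclideanSpace 𝕜 (Fin M),
      ∑ j, (inner 𝕜 (φ j) x : 𝕜) • φ j = ((N : 𝕜) / M) • x)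
    (c₁ c₂ : ℝ) (hc : c₁ ≠ c₂)
    (hangles : {r : ℝ | ∃ j l, j ≠ l ∧ ‖(inner 𝕜 (φ j) (φ l) : 𝕜)‖ = r} = {c₁, c₂}) :
    ∃ m₁ m₂ : ℕ, 0 < m₁ ∧ 0 < m₂ ∧ m₁ + m₂ = N - 1 ∧
      ∀ j, {l | l ≠ j ∧ ‖(inner 𝕜 (φ j) (φ l) : 𝕜)‖ = c₁}.ncard = m₁ ∧
           {l | l ≠ j ∧ ‖(inner 𝕜 (φ j) (φ l) : 𝕜)‖ = c₂}.ncard = m₂ := by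
  classical
  have h1 : c₁ ∈ {r : ℝ | ∃ j l, j ≠ l ∧ ‖(inner 𝕜 (φ j) (φ l) : 𝕜)‖ = r} := by
    rw [hangles]; left; rfl
  have h2 : c₂ ∈ {r : ℝ | ∃ j l, j ≠ l ∧ ‖(inner 𝕜 (φ j) (φ l) : 𝕜)‖ = r} := by
    rw [hangles]; right; rfl
  obtain ⟨j₁, l₁, hjl₁, hv₁⟩ := h1
  obtain ⟨j₂, l₂, hjl₂, hv₂⟩ := h2
  have hc₁0 : 0 ≤ c₁ := hv₁ ▸ norm_nonneg _
  have hc₂0 : 0 ≤ c₂ := hv₂ ▸ norm_nonneg _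
  have hsq : c₁ ^ 2 ≠ c₂ ^ 2 := by
    intro h
    exact hc (by
      have := congrArg Real.sqrt h
      rwa [Real.sqrt_sq hc₁0, Real.sqrt_sq hc₂0] at this)
  have hcov : ∀ j l : Fin N, l ≠ j →
      ‖(inner 𝕜 (φ j) (φ l) : 𝕜)‖ = c₁ ∨ ‖(inner 𝕜 (φ j) (φ l) : 𝕜)‖ = c₂ := by
    intro j l hne
    have : ‖(inner 𝕜 (φ j) (φ l) : 𝕜)‖ ∈ ({c₁, c₂} : Set ℝ) := by
      rw [← hangles]; exact ⟨j, l, hne.symm, rfl⟩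
    simpa using this
  set A : Fin N → Finset (Fin N) :=
    fun j => Finset.univ.filter (fun l => l ≠ j ∧ ‖(inner 𝕜 (φ j) (φ l) : 𝕜)‖ = c₁) with hA
  set B : Fin N → Finset (Fin N) :=
    fun j => Finset.univ.filter (fun l => l ≠ j ∧ ‖(inner 𝕜 (φ j) (φ l) : 𝕜)‖ = c₂) with hB
  have hdisj : ∀ j, Disjoint (A j) (B j) := by
    intro j
    rw [Finset.disjoint_left]
    intro l hlA hlB
    simp only [hA, hB, Finset.mem_filter] at hlA hlB
    exact hc (hlA.2.2 ▸ hlB.2.2)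
  have hunion : ∀ j, A j ∪ B j = Finset.univ.erase j := by
    intro j
    ext l
    simp only [hA, hB, Finset.mem_union, Finset.mem_filter, Finset.mem_univ, true_and,
      Finset.mem_erase, and_true]
    constructor
    · rintro (⟨h, -⟩ | ⟨h, -⟩) <;> exact h
    · intro h
      rcases hcov j l h with h' | h'
      · exact Or.inl ⟨h, h'⟩
      · exact Or.inr ⟨h, h'⟩
  have hcard : ∀ j, (A j).card + (B j).card = N - 1 := by
    intro j
    rw [← Finset.card_union_of_disjoint (hdisj j), hunion j,
      Finset.card_erase_of_mem (Finset.mem_univ j), Finset.card_univ, Fintype.card_fin]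
  have key : ∀ j, ∑ l, ‖(inner 𝕜 (φ j) (φ l) : 𝕜)‖ ^ 2 = (N : ℝ) / M := by
    intro j
    have h := congrArg (fun y => (inner 𝕜 (φ j) y : 𝕜)) (htight (φ j))
    simp only [inner_sum, inner_smul_right] at h
    have hterm : ∀ l, (inner 𝕜 (φ l) (φ j) : 𝕜) * inner 𝕜 (φ j) (φ l)
        = ((‖(inner 𝕜 (φ j) (φ l) : 𝕜)‖ ^ 2 : ℝ) : 𝕜) := by
      intro l
      rw [← inner_conj_symm (φ j) (φ l)]
      rw [RCLike.mul_conj, RCLike.norm_conj]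
      norm_cast
    have hself : (inner 𝕜 (φ j) (φ j) : 𝕜) = 1 := by
      rw [inner_self_eq_norm_sq_to_K, hunit]; norm_num
    rw [hself, mul_one] at h
    simp only [hterm] at h
    apply RCLike.ofReal_injective (K := 𝕜)
    push_cast [← h]
    ring
  have keyj : ∀ j, 1 + (A j).card * c₁ ^ 2 + (B j).card * c₂ ^ 2 = (N : ℝ) / M := by
    intro j
    have h := key j
    rw [← Finset.add_sum_erase _ _ (Finset.mem_univ j)] at h
    have hself : ‖(inner 𝕜 (φ j) (φ j) : 𝕜)‖ ^ 2 = 1 := by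
      rw [inner_self_eq_norm_sq_to_K]
      simp [hunit j]
    rw [hself, ← hunion j, Finset.sum_union (hdisj j)] at h
    have hAsum : ∑ l ∈ A j, ‖(inner 𝕜 (φ j) (φ l) : 𝕜)‖ ^ 2 = (A j).card * c₁ ^ 2 := by
      rw [Finset.sum_congr rfl (fun l hl => by
        simp only [hA, Finset.mem_filter] at hl
        rw [hl.2.2]), Finset.sum_const, nsmul_eq_mul]
    have hBsum : ∑ l ∈ B j, ‖(inner 𝕜 (φ j) (φ l) : 𝕜)‖ ^ 2 = (B j).card * c₂ ^ 2 := by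
      rw [Finset.sum_congr rfl (fun l hl => by
        simp only [hB, Finset.mem_filter] at hl
        rw [hl.2.2]), Finset.sum_const, nsmul_eq_mul]
    rw [hAsum, hBsum] at h
    linarith
  have hAconst : ∀ j j', (A j).card = (A j').card := by
    intro j j'
    have e1 := keyj j
    have e2 := keyj j'
    have e4 : ((A j).card : ℝ) + (B j).card = (A j').card + (B j').card := by
      exact_mod_cast congrArg (Nat.cast (R := ℝ)) ((hcard j).trans (hcard j').symm)
    have h5 : (((A j).card : ℝ) - (A j').card) * (c₁ ^ 2 - c₂ ^ 2) = 0 := by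
      linear_combination e1 - e2 - c₂ ^ 2 * e4
    rcases mul_eq_zero.mp h5 with h | h
    · exact_mod_cast (by linarith : ((A j).card : ℝ) = (A j').card)
    · exact absurd (by linarith : c₁ ^ 2 = c₂ ^ 2) hsq
  have hBconst : ∀ j j', (B j).card = (B j').card := by
    intro j j'
    have h1 := hcard j
    have h2 := hcard j'
    have h3 := hAconst j j'
    omega
  have hApos : 0 < (A j₁).card := by
    apply Finset.card_pos.mpr
    refine ⟨l₁, ?_⟩
    simp only [hA, Finset.mem_filter, Finset.mem_univ, true_and]
    exact ⟨hjl₁.symm, hv₁⟩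
  have hBpos : 0 < (B j₂).card := by
    apply Finset.card_pos.mpr
    refine ⟨l₂, ?_⟩
    simp only [hB, Finset.mem_filter, Finset.mem_univ, true_and]
    exact ⟨hjl₂.symm, hv₂⟩
  refine ⟨(A j₁).card, (B j₂).card, hApos, hBpos, ?_, ?_⟩
  · rw [hBconst j₂ j₁]; exact hcard j₁
  · intro j
    have hsetA : {l | l ≠ j ∧ ‖(inner 𝕜 (φ j) (φ l) : 𝕜)‖ = c₁} = ↑(A j) := by
      ext l; simp [hA]
    have hsetB : {l | l ≠ j ∧ ‖(inner 𝕜 (φ j) (φ l) : 𝕜)‖ = c₂} = ↑(B j) := by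
      ext l; simp [hB]
    rw [hsetA, hsetB, Set.ncard_coe_finset, Set.ncard_coe_finset]
    exact ⟨hAconst j j₁, hBconst j j₂⟩
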